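/- arXiv:0812.1993 — 6 statements merged into one kernel-verified Lean document; each statement's English description precedes it below -/
import Mathlib

section
/- Let T be a finite-dimensional real inner product space, N a finite-dimensional real vector space with a nondegenerate symmetric bilinear form ⟨·,·⟩_N, and A : N → End(T) a linear map such that each A_ξ is self-adjoint on T. Let R⊥ : T × T → End(N) be the bilinear map determined by ⟨R⊥(X,Y)ξ,η⟩_N = ⟨[A_ξ,A_η]X,Y⟩_T (the Ricci equation), and for a fixed orthonormal basis (e_1,…,e_n) of T define 𝓡(ξ₁,ξ₂)ξ₃ := Σ_{i=1}^{n} R⊥(A_{ξ₁}e_i, A_{ξ₂}e_i)ξ₃. Then 𝓡 is an algebraic curvature tensor on (N,⟨·,·⟩_N): 𝓡(ξ₁,ξ₂) = -𝓡(ξ₂,ξ₁); ⟨𝓡(ξ₁,ξ₂)ξ₃,ξ₄⟩_N = -⟨ξ₃, 𝓡(ξ₁,ξ₂)ξ₄⟩_N; ⟨𝓡(ξ₁,ξ₂)ξ₃,ξ₄⟩_N = ⟨𝓡(ξ₃,ξ₄)ξ₁,ξ₂⟩_N; and 𝓡(ξ₁,ξ₂)ξ₃ + 𝓡(ξ₂,ξ₃)ξ₁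 + 𝓡(ξ₃,ξ₁)ξ₂ = 0 for all ξ₁,ξ₂,ξ₃,ξ₄ ∈ N. -/
open scoped RealInnerProductSpace

/-- Trace-commutativity for sums over an orthonormal basis. -/
lemma sum_inner_comp_comm_aux {T : Type*} [NormedAddCommGroup T] [InnerProductSpace ℝ T]
    {n : ℕ} (e : OrthonormalBasis (Fin n) ℝ T) (P Q : T →ₗ[ℝ] T) :
    ∑ i, ⟪P (Q (e i)), e i⟫ = ∑ i, ⟪Q (P (e i)), e i⟫ := by
  have key : ∀ (R : T →ₗ[ℝ] T) (x y : T),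
      ⟪R x, y⟫ = ∑ j, ⟪e j, x⟫ * ⟪R (e j), y⟫ := by
    intro R x y
    conv_lhs => rw [← e.sum_repr' x]
    rw [map_sum, sum_inner]
    simp [real_inner_smul_left]
  calc ∑ i, ⟪P (Q (e i)), e i⟫
      = ∑ i, ∑ j, ⟪e j, Q (e i)⟫ * ⟪P (e j), e i⟫ :=
        Finset.sum_congr rfl fun i _ => key P (Q (e i)) (e i)
    _ = ∑ j, ∑ i, ⟪e i, P (e j)⟫ * ⟪Q (e i), e j⟫ := by
        rw [Finset.sum_comm]
        refine Finset.sum_congr rfl fun j _ => Finset.sum_congr rfl fun i _ => ?_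
        rw [real_inner_comm (e j) (Q (e i)), real_inner_comm (e i) (P (e j))]
        ring
    _ = ∑ j, ⟪Q (P (e j)), e j⟫ :=
        Finset.sum_congr rfl fun j _ => (key Q (P (e j)) (e j)).symm

theorem normal_curvature_is_algebraic_curvature_tensor
    {T N : Type*} [NormedAddCommGroup T] [InnerProductSpace ℝ T] [FiniteDimensional ℝ T]
    [AddCommGroup N] [Module ℝ N] [FiniteDimensional ℝ N]
    (gN : LinearMap.BilinForm ℝ N)
    (hsymm : ∀ ξ η : N, gN ξ η = gN η ξ)
    (hnondeg : gN.Nondegenerate)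
    (A : N →ₗ[ℝ] (T →ₗ[ℝ] T))
    (hA : ∀ (ξ : N) (u w : T), ⟪A ξ u, w⟫ = ⟪u, A ξ w⟫)
    (Rp : T →ₗ[ℝ] T →ₗ[ℝ] (N →ₗ[ℝ] N))
    (hRic : ∀ (X Y : T) (ξ η : N),
      gN (Rp X Y ξ) η = ⟪(A ξ * A η - A η * A ξ) X, Y⟫)
    {n : ℕ} (e : OrthonormalBasis (Fin n) ℝ T)
    (calR : N → N → (N →ₗ[ℝ] N))
    (hcalR : ∀ ξ₁ ξ₂ : N, calR ξ₁ ξ₂ = ∑ i, Rp (A ξ₁ (e i)) (A ξ₂ (e i))) :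
    ∀ ξ₁ ξ₂ ξ₃ ξ₄ : N,
      calR ξ₁ ξ₂ = - calR ξ₂ ξ₁ ∧
      gN (calR ξ₁ ξ₂ ξ₃) ξ₄ = - gN ξ₃ (calR ξ₁ ξ₂ ξ₄) ∧
      gN (calR ξ₁ ξ₂ ξ₃) ξ₄ = gN (calR ξ₃ ξ₄ ξ₁) ξ₂ ∧
      calR ξ₁ ξ₂ ξ₃ + calR ξ₂ ξ₃ ξ₁ + calR ξ₃ ξ₁ ξ₂ = 0 := by
  -- the quadruple trace
  set t : N → N → N → N → ℝ :=
    fun a b c d => ∑ i, ⟪A a (A b (A c (A d (e i)))), e i⟫ with ht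
  -- cyclicity of the trace
  have tcyc : ∀ a b c d : N, t a b c d = t b c d a := by
    intro a b c d
    have := sum_inner_comp_comm_aux e (A a) (A b ∘ₗ A c ∘ₗ A d)
    simpa [ht, LinearMap.comp_apply] using this
  -- reversal of the trace (from self-adjointness)
  have trev : ∀ a b c d : N, t a b c d = t d c b a := by
    intro a b c d
    simp only [ht]
    refine Finset.sum_congr rfl fun i _ => ?_
    rw [hA a, hA b, hA c, hA d, real_inner_comm]
  -- the main computation of gN (calR a b c) d
  have hF : ∀ a b c d : N, gN (calR a b c) d = t b c d a - t b d c a := by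
    intro a b c d
    rw [hcalR]
    rw [LinearMap.sum_apply, map_sum, LinearMap.sum_apply]
    rw [ht, ← Finset.sum_sub_distrib]
    refine Finset.sum_congr rfl fun i _ => ?_
    rw [hRic]
    simp only [LinearMap.sub_apply, Module.End.mul_apply, inner_sub_left]
    rw [← hA b (A c (A d (A a (e i)))) (e i), ← hA b (A d (A c (A a (e i)))) (e i)]
  -- deduce equality from nondegeneracy
  have geq : ∀ x y : N, (∀ η : N, gN x η = gN y η) → x = y := by
    intro x y h
    have : x - y = 0 := hnondeg.1 (x - y) (fun η => by
      rw [map_sub, LinearMap.sub_apply, h η, sub_self])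
    exact sub_eq_zero.mp this
  intro ξ₁ ξ₂ ξ₃ ξ₄
  -- scalar antisymmetry in the first pair
  have anti : ∀ a b c d : N, gN (calR b a c) d = - gN (calR a b c) d := by
    intro a b c d
    rw [hF, hF, trev a c d b, trev a d c b]
    ring
  refine ⟨?_, ?_, ?_, ?_⟩
  · apply LinearMap.ext; intro ξ₃'
    apply geq; intro η
    have := anti ξ₂ ξ₁ ξ₃' η
    simpa using this
  · rw [hsymm ξ₃ (calR ξ₁ ξ₂ ξ₄), hF, hF]
    ring
  · rw [hF, hF]
    have h1 : t ξ₂ ξ₃ ξ₄ ξ₁ = t ξ₁ ξ₂ ξ₃ ξ₄ := (tcyc ξ₁ ξ₂ ξ₃ ξ₄).symm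
    have h2 : t ξ₂ ξ₄ ξ₃ ξ₁ = t ξ₁ ξ₂ ξ₄ ξ₃ := (tcyc ξ₁ ξ₂ ξ₄ ξ₃).symm
    have h3 : t ξ₄ ξ₁ ξ₂ ξ₃ = t ξ₁ ξ₂ ξ₃ ξ₄ := tcyc ξ₄ ξ₁ ξ₂ ξ₃
    have h4 : t ξ₄ ξ₂ ξ₁ ξ₃ = t ξ₁ ξ₂ ξ₄ ξ₃ := by
      rw [tcyc ξ₄ ξ₂ ξ₁ ξ₃, trev ξ₂ ξ₁ ξ₃ ξ₄, tcyc ξ₄ ξ₃ ξ₁ ξ₂, tcyc ξ₃ ξ₁ ξ₂ ξ₄]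
    rw [h1, h2, h3, h4]
  · apply geq _ 0; intro η
    rw [map_zero, LinearMap.zero_apply, map_add, map_add,
      LinearMap.add_apply, LinearMap.add_apply, hF, hF, hF]
    have h1 : t ξ₂ ξ₃ η ξ₁ = t ξ₁ ξ₂ ξ₃ η := (tcyc ξ₁ ξ₂ ξ₃ η).symm
    have h2 : t ξ₂ η ξ₃ ξ₁ = t ξ₁ ξ₂ η ξ₃ := (tcyc ξ₁ ξ₂ η ξ₃).symm
    have h3 : t ξ₃ ξ₁ η ξ₂ = t ξ₁ η ξ₂ ξ₃ := tcyc ξ₃ ξ₁ η ξ₂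
    have h4 : t ξ₃ η ξ₁ ξ₂ = t ξ₁ ξ₂ ξ₃ η := by
      rw [tcyc ξ₃ η ξ₁ ξ₂, tcyc η ξ₁ ξ₂ ξ₃]
    rw [h1, h2, h3, h4]
    ring
end

section
/- Let T be a finite-dimensional real inner product space, N a finite-dimensional real vector space with a nondegenerate symmetric bilinear form ⟨·,·⟩_N, and A : N → End(T) a linear map such that each A_ξ is self-adjoint on T. Let R⊥ : T × T → End(N) be the bilinear map determined by ⟨R⊥(X,Y)ξ,η⟩_N = ⟨[A_ξ,A_η]X,Y⟩_T, and for an orthonormal basis (e_1,…,e_n) of T define 𝓡(ξ₁,ξ₂)ξ₃ := Σ_{i=1}^{n} R⊥(A_{ξ₁}e_i, A_{ξ₂}e_i)ξ₃. Then ⟨𝓡(ξ₁,ξ₂)ξ₃,ξ₄⟩_N = (1/2)·Tr([A_{ξ₁},A_{ξ₂}] ∘ [A_{ξ₃},A_{ξ₄}]) for all ξ₁,ξ₂,ξ₃,ξ₄ ∈ N; in particular 𝓡 does not depend on the choice of orthonormal basis of T. -/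
open scoped RealInnerProductSpace

private lemma trace_eq_sum_inner' {T : Type*} [NormedAddCommGroup T] [InnerProductSpace ℝ T]
    [FiniteDimensional ℝ T] {n : ℕ} (e : OrthonormalBasis (Fin n) ℝ T) (M : T →ₗ[ℝ] T) :
    LinearMap.trace ℝ T M = ∑ i, ⟪M (e i), e i⟫ := by
  rw [LinearMap.trace_eq_matrix_trace ℝ e.toBasis, Matrix.trace]
  congr 1; ext i
  rw [Matrix.diag_apply, LinearMap.toMatrix_apply, OrthonormalBasis.coe_toBasis,
    e.coe_toBasis_repr_apply, e.repr_apply_apply, real_inner_comm]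

theorem normal_curvature_trace_formula
    {T N : Type*} [NormedAddCommGroup T] [InnerProductSpace ℝ T] [FiniteDimensional ℝ T]
    [AddCommGroup N] [Module ℝ N] [FiniteDimensional ℝ N]
    (gN : LinearMap.BilinForm ℝ N)
    (hsymm : ∀ ξ η : N, gN ξ η = gN η ξ)
    (hnondeg : gN.Nondegenerate)
    (A : N →ₗ[ℝ] (T →ₗ[ℝ] T))
    (hA : ∀ (ξ : N) (u w : T), ⟪A ξ u, w⟫ = ⟪u, A ξ w⟫)
    (Rp : T →ₗ[ℝ] T →ₗ[ℝ] (N →ₗ[ℝ] N))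
    (hRic : ∀ (X Y : T) (ξ η : N),
      gN (Rp X Y ξ) η = ⟪(A ξ * A η - A η * A ξ) X, Y⟫)
    {n : ℕ} (e : OrthonormalBasis (Fin n) ℝ T)
    (calR : N → N → (N →ₗ[ℝ] N))
    (hcalR : ∀ ξ₁ ξ₂ : N, calR ξ₁ ξ₂ = ∑ i, Rp (A ξ₁ (e i)) (A ξ₂ (e i))) :
    (∀ ξ₁ ξ₂ ξ₃ ξ₄ : N,
      gN (calR ξ₁ ξ₂ ξ₃) ξ₄ =
        (1/2) * LinearMap.trace ℝ T
          ((A ξ₁ * A ξ₂ - A ξ₂ * A ξ₁) * (A ξ₃ * A ξ₄ - A ξ₄ * A ξ₃))) ∧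
    (∀ (f : OrthonormalBasis (Fin n) ℝ T) (ξ₁ ξ₂ : N),
      (∑ i, Rp (A ξ₁ (f i)) (A ξ₂ (f i))) = calR ξ₁ ξ₂) := by
  -- skew-adjointness of commutators of shape operators
  have hskew : ∀ (ξ₃ ξ₄ : N) (u w : T),
      ⟪(A ξ₃ * A ξ₄ - A ξ₄ * A ξ₃) u, w⟫ = -⟪u, (A ξ₃ * A ξ₄ - A ξ₄ * A ξ₃) w⟫ := by
    intro ξ₃ ξ₄ u w
    simp only [LinearMap.sub_apply, Module.End.mul_apply, inner_sub_left, inner_sub_right]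
    rw [hA ξ₃ (A ξ₄ u) w, hA ξ₄ u (A ξ₃ w), hA ξ₄ (A ξ₃ u) w, hA ξ₃ u (A ξ₄ w)]
    ring
  -- the main computation, for an arbitrary orthonormal basis f
  have key : ∀ (f : OrthonormalBasis (Fin n) ℝ T) (ξ₁ ξ₂ ξ₃ ξ₄ : N),
      gN ((∑ i, Rp (A ξ₁ (f i)) (A ξ₂ (f i))) ξ₃) ξ₄ =
        (1/2) * LinearMap.trace ℝ T
          ((A ξ₁ * A ξ₂ - A ξ₂ * A ξ₁) * (A ξ₃ * A ξ₄ - A ξ₄ * A ξ₃)) := by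
    intro f ξ₁ ξ₂ ξ₃ ξ₄
    set B₁ := A ξ₁; set B₂ := A ξ₂
    set C := A ξ₃ * A ξ₄ - A ξ₄ * A ξ₃ with hC
    have step1 : gN ((∑ i, Rp (B₁ (f i)) (B₂ (f i))) ξ₃) ξ₄ =
        LinearMap.trace ℝ T (B₂ * C * B₁) := by
      rw [trace_eq_sum_inner' f, LinearMap.sum_apply, map_sum, LinearMap.sum_apply]
      refine Finset.sum_congr rfl fun i _ => ?_
      rw [hRic, ← hC]
      simp only [Module.End.mul_apply]
      rw [real_inner_comm, hA ξ₂ (f i) (C (B₁ (f i))), real_inner_comm]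
    have t2 : LinearMap.trace ℝ T (B₂ * B₁ * C) = -LinearMap.trace ℝ T (B₁ * B₂ * C) := by
      have : LinearMap.trace ℝ T (B₂ * B₁ * C) = -LinearMap.trace ℝ T (C * (B₁ * B₂)) := by
        rw [trace_eq_sum_inner' e, trace_eq_sum_inner' e, ← Finset.sum_neg_distrib]
        refine Finset.sum_congr rfl fun i _ => ?_
        simp only [Module.End.mul_apply]
        rw [real_inner_comm, ← hA ξ₂, ← hA ξ₁, hskew ξ₃ ξ₄, real_inner_comm]
        ring
      rw [this, LinearMap.trace_mul_comm]
    have step2 : LinearMap.trace ℝ T (B₂ * C * B₁) =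
        (1/2) * LinearMap.trace ℝ T ((B₁ * B₂ - B₂ * B₁) * C) := by
      have h1 : LinearMap.trace ℝ T (B₂ * C * B₁) = LinearMap.trace ℝ T (B₁ * B₂ * C) := by
        rw [LinearMap.trace_mul_comm, ← mul_assoc]
      have hexp : (B₁ * B₂ - B₂ * B₁) * C = B₁ * B₂ * C - B₂ * B₁ * C := sub_mul _ _ _
      rw [h1, hexp, map_sub, t2]; ring
    rw [step1, step2]
  have part2 : ∀ (f : OrthonormalBasis (Fin n) ℝ T) (ξ₁ ξ₂ : N),
      (∑ i, Rp (A ξ₁ (f i)) (A ξ₂ (f i))) = calR ξ₁ ξ₂ := by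
    intro f ξ₁ ξ₂
    ext ξ₃
    apply sub_eq_zero.mp
    apply hnondeg.1
    intro ξ₄
    rw [hsymm, map_sub, sub_eq_zero, hsymm ξ₄, hsymm ξ₄, hcalR, key, key]
  exact ⟨fun ξ₁ ξ₂ ξ₃ ξ₄ => by rw [← part2 e ξ₁ ξ₂, key], part2⟩
end

section
/- Let T be a finite-dimensional real inner product space, N a finite-dimensional real vector space with a nondegenerate symmetric bilinear form ⟨·,·⟩_N, and A : N → End(T) a linear map such that each A_ξ is self-adjoint on T. Let R⊥ : T × T → End(N) be the bilinear map determined by ⟨R⊥(X,Y)ξ,η⟩_N = ⟨[A_ξ,A_η]X,Y⟩_T, and for an orthonormal basis (e_1,…,e_n) of T define 𝓡(ξ₁,ξ₂)ξ₃ := Σ_{i=1}^{n} R⊥(A_{ξ₁}e_i, A_{ξ₂}e_i)ξ₃. Then the linear span in End(N) of the endomorphisms 𝓡(ξ₁,ξ₂), for ξ₁,ξ₂ ∈ N, equals the linear span of the endomorphisms R⊥(X,Y), for X,Y ∈ T. -/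
open scoped RealInnerProductSpace

theorem span_normal_curvature_eq_span_Rperp
    {T N : Type*} [NormedAddCommGroup T] [InnerProductSpace ℝ T] [FiniteDimensional ℝ T]
    [AddCommGroup N] [Module ℝ N] [FiniteDimensional ℝ N]
    (gN : LinearMap.BilinForm ℝ N)
    (hsymm : ∀ ξ η : N, gN ξ η = gN η ξ)
    (hnondeg : gN.Nondegenerate)
    (A : N →ₗ[ℝ] (T →ₗ[ℝ] T))
    (hA : ∀ (ξ : N) (u w : T), ⟪A ξ u, w⟫ = ⟪u, A ξ w⟫)
    (Rp : T →ₗ[ℝ] T →ₗ[ℝ] (N →ₗ[ℝ] N))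
    (hRic : ∀ (X Y : T) (ξ η : N),
      gN (Rp X Y ξ) η = ⟪(A ξ * A η - A η * A ξ) X, Y⟫)
    {n : ℕ} (e : OrthonormalBasis (Fin n) ℝ T)
    (calR : N → N → (N →ₗ[ℝ] N))
    (hcalR : ∀ ξ₁ ξ₂ : N, calR ξ₁ ξ₂ = ∑ i, Rp (A ξ₁ (e i)) (A ξ₂ (e i))) :
    Submodule.span ℝ {F : N →ₗ[ℝ] N | ∃ ξ₁ ξ₂ : N, F = calR ξ₁ ξ₂} =
      Submodule.span ℝ {F : N →ₗ[ℝ] N | ∃ X Y : T, F = Rp X Y} := by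
  classical
  apply le_antisymm
  · rw [Submodule.span_le]
    rintro F ⟨ξ₁, ξ₂, rfl⟩
    rw [hcalR]
    exact Submodule.sum_mem _ fun i _ => Submodule.subset_span ⟨_, _, rfl⟩
  · rw [← Subspace.dualAnnihilator_le_dualAnnihilator_iff]
    intro φ hφ
    rw [Submodule.mem_dualAnnihilator] at hφ ⊢
    -- φ kills every calR ξ η
    have h0 : ∀ ξ η : N, φ (calR ξ η) = 0 := fun ξ η =>
      hφ _ (Submodule.subset_span ⟨ξ, η, rfl⟩)
    -- antisymmetry of Rp
    have hanti : ∀ X Y : T, Rp X Y = - Rp Y X := by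
      intro X Y
      ext ξ
      have h : ∀ η, gN (Rp X Y ξ + Rp Y X ξ) η = 0 := by
        intro η
        have h1 := hRic X Y ξ η
        have h2 := hRic Y X ξ η
        have e1 : ⟪A ξ (A η Y), X⟫ = ⟪A η (A ξ X), Y⟫ := by
          rw [hA ξ (A η Y) X, hA η Y (A ξ X), real_inner_comm]
        have e2 : ⟪A η (A ξ Y), X⟫ = ⟪A ξ (A η X), Y⟫ := by
          rw [hA η (A ξ Y) X, hA ξ Y (A η X), real_inner_comm]
        have hcomm : ⟪(A ξ * A η - A η * A ξ) Y, X⟫ =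
            - ⟪(A ξ * A η - A η * A ξ) X, Y⟫ := by
          simp only [LinearMap.sub_apply, Module.End.mul_apply, inner_sub_left]
          rw [e1, e2]
          ring
        have := map_add gN (Rp X Y ξ) (Rp Y X ξ)
        rw [this, LinearMap.add_apply, h1, h2, hcomm]
        ring
      have hz : Rp X Y ξ + Rp Y X ξ = 0 := hnondeg.1 _ h
      simp only [LinearMap.neg_apply]
      exact eq_neg_of_add_eq_zero_left hz
    -- a basis of N and its gN-dual basis
    let v : Module.Basis (Fin (Module.finrank ℝ N)) ℝ N := Module.finBasis ℝ N
    let w : Module.Basis (Fin (Module.finrank ℝ N)) ℝ N := gN.dualBasis hnondeg v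
    have hexp : ∀ x : N, x = ∑ a, gN x (v a) • w a := by
      intro x
      conv_lhs => rw [← Module.Basis.sum_repr w x]
      exact Finset.sum_congr rfl fun a _ => by
        rw [LinearMap.BilinForm.dualBasis_repr_apply]
    -- elementary endomorphisms
    let E : Fin (Module.finrank ℝ N) → Fin (Module.finrank ℝ N) → (N →ₗ[ℝ] N) :=
      fun a b => LinearMap.smulRight (v.coord b) (w a)
    have hdecomp : ∀ B : N →ₗ[ℝ] N, B = ∑ a, ∑ b, gN (B (v b)) (v a) • E a b := by
      intro B
      refine v.ext fun c => ?_
      have hE : ∀ a b, E a b (v c) = if c = b then w a else 0 := by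
        intro a b
        simp only [E, LinearMap.smulRight_apply, Module.Basis.coord_apply, Module.Basis.repr_self,
          Finsupp.single_apply, eq_comm (a := b) (b := c)]
        split <;> simp
      simp only [LinearMap.sum_apply, LinearMap.smul_apply, hE, smul_ite, smul_zero,
        Finset.sum_ite_eq, Finset.mem_univ, if_true]
      exact hexp (B (v c))
    -- expansion of φ
    have hφB : ∀ B : N →ₗ[ℝ] N, φ B = ∑ a, ∑ b, gN (B (v b)) (v a) * φ (E a b) := by
      intro B
      conv_lhs => rw [hdecomp B]
      rw [map_sum]
      exact Finset.sum_congr rfl fun a _ => by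
        rw [map_sum]
        exact Finset.sum_congr rfl fun b _ => by rw [map_smul, smul_eq_mul]
    -- the operator L on T
    set L : T →ₗ[ℝ] T :=
      ∑ a, ∑ b, φ (E a b) • (A (v b) * A (v a) - A (v a) * A (v b)) with hLdef
    have hL : ∀ X Y : T, φ (Rp X Y) = ⟪L X, Y⟫ := by
      intro X Y
      rw [hφB]
      simp only [hLdef, LinearMap.sum_apply, LinearMap.smul_apply, sum_inner,
        real_inner_smul_left]
      exact Finset.sum_congr rfl fun a _ => Finset.sum_congr rfl fun b _ => by
        rw [hRic, mul_comm]
    -- L is skew-adjoint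
    have hskew : ∀ x y : T, ⟪L x, y⟫ = - ⟪L y, x⟫ := by
      intro x y
      rw [← hL, ← hL, hanti x y, map_neg]
    -- trace over the orthonormal basis
    have htr : ∀ f : T →ₗ[ℝ] T, LinearMap.trace ℝ T f = ∑ i, ⟪f (e i), e i⟫ := by
      intro f
      rw [LinearMap.trace_eq_matrix_trace ℝ e.toBasis, Matrix.trace]
      refine Finset.sum_congr rfl fun i _ => ?_
      rw [Matrix.diag_apply, LinearMap.toMatrix_apply, OrthonormalBasis.coe_toBasis,
        OrthonormalBasis.coe_toBasis_repr_apply, OrthonormalBasis.repr_apply_apply,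
        real_inner_comm]
    have htrL : ∀ ξ η : N, LinearMap.trace ℝ T (L * (A ξ * A η)) = 0 := by
      intro ξ η
      rw [← mul_assoc, LinearMap.trace_mul_comm, htr]
      have : ∀ i, ⟪(A η * (L * A ξ)) (e i), e i⟫ = φ (Rp (A ξ (e i)) (A η (e i))) := by
        intro i
        rw [Module.End.mul_apply, hA η, Module.End.mul_apply, ← hL]
      rw [Finset.sum_congr rfl fun i _ => this i, ← map_sum]
      rw [← hcalR, h0]
    have htrLL : LinearMap.trace ℝ T (L * L) = 0 := by
      have hexpand : L * L =
          ∑ a, ∑ b, φ (E a b) •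
            (L * (A (v b) * A (v a)) - L * (A (v a) * A (v b))) := by
        nth_rewrite 2 [hLdef]
        rw [Finset.mul_sum]
        refine Finset.sum_congr rfl fun a _ => ?_
        rw [Finset.mul_sum]
        refine Finset.sum_congr rfl fun b _ => ?_
        rw [mul_smul_comm, mul_sub]
      rw [hexpand, map_sum]
      refine Finset.sum_eq_zero fun a _ => ?_
      rw [map_sum]
      refine Finset.sum_eq_zero fun b _ => ?_
      rw [map_smul, map_sub, htrL, htrL, sub_zero, smul_zero]
    -- conclude L = 0
    have hsum0 : ∑ i, ⟪L (e i), L (e i)⟫ = 0 := by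
      have h1 : ∀ i : Fin n, ⟪(L * L) (e i), e i⟫ = -⟪L (e i), L (e i)⟫ := fun i => by
        rw [Module.End.mul_apply, hskew (L (e i)) (e i)]
      have h2 := htrLL
      rw [htr, Finset.sum_congr rfl fun i _ => h1 i, Finset.sum_neg_distrib,
        neg_eq_zero] at h2
      exact h2
    have hLe : ∀ i, L (e i) = 0 := by
      intro i
      have hnn : ∀ j ∈ Finset.univ, (0:ℝ) ≤ ⟪L (e j), L (e j)⟫ :=
        fun j _ => real_inner_self_nonneg
      have := (Finset.sum_eq_zero_iff_of_nonneg hnn).mp hsum0 i (Finset.mem_univ i)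
      exact inner_self_eq_zero.mp this
    have hL0 : L = 0 := e.toBasis.ext fun i => by
      rw [OrthonormalBasis.coe_toBasis, hLe]; rfl
    -- φ kills every Rp X Y, hence the whole span
    intro F hF
    have hgen : {F : N →ₗ[ℝ] N | ∃ X Y : T, F = Rp X Y} ⊆ (LinearMap.ker φ : Set _) := by
      rintro G ⟨X, Y, rfl⟩
      have : φ (Rp X Y) = 0 := by rw [hL, hL0]; simp
      exact this
    exact (Submodule.span_le.mpr hgen) hF
end

section
/- Let E be a finite-dimensional real inner product space, V ⊆ E a subspace, and R : E × E → End(E) a bilinear map such that R(x,y) = -R(y,x), each R(x,y) is skew-adjoint, R satisfies the first Bianchi identity R(x,y)z + R(y,z)x + R(z,x)y = 0, and each R(x,y) maps V into V. Then: (i) R(x,y) = 0 whenever x ∈ V and y ∈ V^⊥; (ii) for x,x' ∈ V the endomorphism R(x,x') vanishes on V^⊥; (iii) for y,y' ∈ V^⊥ the endomorphism R(y,y') vanishes on V. -/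
open scoped RealInnerProductSpace

theorem curvature_vanishes_across_invariant_splitting
    {E : Type*} [NormedAddCommGroup E] [InnerProductSpace ℝ E] [FiniteDimensional ℝ E]
    (V : Submodule ℝ E)
    (R : E →ₗ[ℝ] E →ₗ[ℝ] (E →ₗ[ℝ] E))
    (hanti : ∀ x y : E, R x y = - R y x)
    (hskew : ∀ x y u w : E, ⟪R x y u, w⟫ = - ⟪u, R x y w⟫)
    (hbianchi : ∀ x y z : E, R x y z + R y z x + R z x y = 0)
    (hinv : ∀ x y : E, ∀ v ∈ V, R x y v ∈ V) :
    (∀ x ∈ V, ∀ y ∈ Vᗮ, R x y = 0) ∧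
    (∀ x ∈ V, ∀ x' ∈ V, ∀ y ∈ Vᗮ, R x x' y = 0) ∧
    (∀ y ∈ Vᗮ, ∀ y' ∈ Vᗮ, ∀ x ∈ V, R y y' x = 0) := by
  have hB : ∀ a b c d : E, ⟪R a b c, d⟫ + ⟪R b c a, d⟫ + ⟪R c a b, d⟫ = 0 := by
    intro a b c d
    have h : ⟪R a b c + R b c a + R c a b, d⟫ = (0 : ℝ) := by
      rw [hbianchi a b c]; simp
    simpa [inner_add_left] using h
  have hA1 : ∀ a b c d : E, ⟪R a b c, d⟫ = -⟪R b a c, d⟫ := by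
    intro a b c d
    rw [hanti a b]
    simp [inner_neg_left]
  have hA2 : ∀ a b c d : E, ⟪R a b c, d⟫ = -⟪R a b d, c⟫ := by
    intro a b c d
    rw [hskew a b c d, real_inner_comm]
  have hsym : ∀ a b c d : E, ⟪R a b c, d⟫ = ⟪R c d a, b⟫ := by
    intro x y z w
    have b1 := hB x y z w
    have b2 := hB y z w x
    have b3 := hB z w x y
    have b4 := hB w x y z
    linarith [hA2 x y z w, hA2 y z x w, hA2 z w y x, hA2 w x z y,
      hA1 x z w y, hA2 z x w y, hA1 y w x z, hA2 w y x z,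
      hA1 x y z w, hA2 x y z w, hA1 z w x y]
  have part1 : ∀ x ∈ V, ∀ y ∈ Vᗮ, R x y = 0 := by
    intro x hx y hy
    ext z
    rw [LinearMap.zero_apply, ← inner_self_eq_zero (𝕜 := ℝ)]
    rw [hsym]
    exact hy (R z (R x y z) x) (hinv _ _ x hx)
  refine ⟨part1, ?_, ?_⟩
  · intro x hx x' hx' y hy
    have hb := hbianchi x x' y
    have h1 : R x' y = 0 := part1 x' hx' y hy
    have h2 : R y x = 0 := by rw [hanti]; rw [part1 x hx y hy]; simp
    rw [h1, h2] at hb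
    simpa using hb
  · intro y hy y' hy' x hx
    have hb := hbianchi y y' x
    have h1 : R y' x = 0 := by rw [hanti]; rw [part1 x hx y' hy']; simp
    have h2 : R x y = 0 := part1 x hx y hy
    rw [h1, h2] at hb
    simpa using hb
end

section
/- Let E be a finite-dimensional real inner product space with inner product h, V ⊆ E a subspace, and Q : E → End(E) a linear map such that each Q(x) is skew-adjoint, Q satisfies the cyclic identity h(Q(x)y,z) + h(Q(y)z,x) + h(Q(z)x,y) = 0 for all x,y,z ∈ E, and each Q(x) maps V into V. Then for every x ∈ V the endomorphism Q(x) vanishes on V^⊥, and for every y ∈ V^⊥ the endomorphism Q(y) vanishes on V. -/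
open scoped RealInnerProductSpace

theorem weak_curvature_vanishes_across_invariant_splitting
    {E : Type*} [NormedAddCommGroup E] [InnerProductSpace ℝ E] [FiniteDimensional ℝ E]
    (V : Submodule ℝ E)
    (Q : E →ₗ[ℝ] (E →ₗ[ℝ] E))
    (hskew : ∀ x u w : E, ⟪Q x u, w⟫ = - ⟪u, Q x w⟫)
    (hcyc : ∀ x y z : E, ⟪Q x y, z⟫ + ⟪Q y z, x⟫ + ⟪Q z x, y⟫ = 0)
    (hinv : ∀ x : E, ∀ v ∈ V, Q x v ∈ V) :
    (∀ x ∈ V, ∀ y ∈ Vᗮ, Q x y = 0) ∧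
    (∀ y ∈ Vᗮ, ∀ x ∈ V, Q y x = 0) := by
  have key : ∀ x ∈ V, ∀ y ∈ Vᗮ, Q x y = 0 ∧ Q y x = 0 := by
    intro x hx y hy
    have heq : Q x y = Q y x := by
      apply ext_inner_right ℝ
      intro z
      have h1 := hcyc x y z
      have h2 : ⟪Q z x, y⟫ = 0 := hy (Q z x) (hinv z x hx)
      have h3 : ⟪Q y z, x⟫ = - ⟪Q y x, z⟫ := by
        rw [hskew y z x, real_inner_comm]
      rw [h2, h3] at h1
      linarith
    have hmemV : Q x y ∈ V := heq ▸ hinv y x hx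
    have hmemVp : Q x y ∈ Vᗮ := by
      intro v hv
      have := hy (Q x v) (hinv x v hv)
      rw [hskew x v y] at this
      linarith
    have : Q x y = 0 := by
      have := (Submodule.orthogonal_disjoint V).le_bot ⟨hmemV, hmemVp⟩
      simpa using this
    exact ⟨this, heq ▸ this⟩
  exact ⟨fun x hx y hy => (key x hx y hy).1, fun y hy x hx => (key x hx y hy).2⟩
end

section
/- Let (𝓔,h) be a finite-dimensional Euclidean vector space and 𝔤 ⊆ 𝔰𝔬(𝓔,h) a Lie subalgebra. Suppose 𝔤 is spanned by the set {R(x,y) : R ∈ 𝒮, x,y ∈ 𝓔} ∪ {Q(x) : Q ∈ 𝒯, x ∈ 𝓔}, where 𝒮 ⊆ K(𝔤) is a set of algebraic curvature tensors with values in 𝔤 and 𝒯 ⊆ B_h(𝔤) is a set of algebraic weak curvature tensors with values in 𝔤. Then 𝔤 has the Borel–Lichnérowicz property: there are an orthogonal decomposition 𝓔 = E_0 ⊕ E_1 ⊕ … ⊕ E_ℓ and a decomposition 𝔤 = 𝔤_1 ⊕ … ⊕ 𝔤_ℓ into commuting ideals such that 𝔤 acts trivially on E_0, each 𝔤_j acts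 irreducibly on E_j, and 𝔤_j acts trivially on E_i for i ≠ j. -/
open scoped RealInnerProductSpace

open Module

/-- Pair symmetry of algebraic curvature tensors, abstract form. -/
lemma bl_pair_symm {E : Type*} (b : E → E → E → E → ℝ)
    (h1 : ∀ x y z w, b x y z w = - b y x z w)
    (h2 : ∀ x y z w, b x y z w = - b x y w z)
    (hB : ∀ x y z w, b x y z w + b y z x w + b z x y w = 0)
    (x y z w : E) : b x y z w = b z w x y := by
  have e1 := hB x y z w
  have e2 := hB y z w x
  have e3 := hB z w x y
  have e4 := hB w x y z
  have a1 := h2 y z x w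
  have a2 := h2 w x z y
  have a3 : b z x y w = b x z w y := by rw [h1 z x y w, h2 x z y w, neg_neg]
  have a4 := h2 z w y x
  have a5 : b w y z x = b y w x z := by rw [h1 w y z x, h2 y w z x, neg_neg]
  have a6 := h2 x y w z
  linarith

/-- The submodule of endomorphisms vanishing on a given submodule. -/
def blVanishingOn {E : Type*} [NormedAddCommGroup E] [InnerProductSpace ℝ E]
    (p : Submodule ℝ E) : Submodule ℝ (E →ₗ[ℝ] E) where
  carrier := {A | ∀ x ∈ p, A x = 0}
  add_mem' := by intro a b ha hb x hx; simp [ha x hx, hb x hx]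
  zero_mem' := by intro x hx; simp
  smul_mem' := by intro c a ha x hx; simp [ha x hx]

lemma blVanishingOn_mem {E : Type*} [NormedAddCommGroup E] [InnerProductSpace ℝ E]
    {p : Submodule ℝ E} {A : E →ₗ[ℝ] E} :
    A ∈ blVanishingOn p ↔ ∀ x ∈ p, A x = 0 := Iff.rfl

lemma bl_exists_sum {M : Type*} [AddCommGroup M] [Module ℝ M] {ι : Type*} [Fintype ι]
    (p : ι → Submodule ℝ M) {x : M} (hx : x ∈ ⨆ i, p i) :
    ∃ f : ι → M, (∀ i, f i ∈ p i) ∧ ∑ i, f i = x := by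
  classical
  obtain ⟨f, hf, hsum⟩ := (Submodule.mem_iSup_iff_exists_finsupp p x).mp hx
  exact ⟨f, hf, by rw [← hsum, Finsupp.sum_fintype]; exact fun _ => rfl⟩

lemma bl_map_eq_zero {E : Type*} [NormedAddCommGroup E] [InnerProductSpace ℝ E]
    {ι : Type*} (p : ι → Submodule ℝ E) (hp : ⨆ i, p i = ⊤)
    (A : E →ₗ[ℝ] E) (h : ∀ i, ∀ x ∈ p i, A x = 0) : A = 0 := by
  rw [← LinearMap.ker_eq_top, eq_top_iff, ← hp]
  exact iSup_le fun i x hx => LinearMap.mem_ker.mpr (h i x hx)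

lemma bl_vec_eq_zero {E : Type*} [NormedAddCommGroup E] [InnerProductSpace ℝ E]
    {ι : Type*} [Fintype ι] (p : ι → Submodule ℝ E) (hp : ⨆ i, p i = ⊤)
    (v : E) (h : ∀ i, ∀ z ∈ p i, ⟪v, z⟫ = 0) : v = 0 := by
  have hv : ∀ z : E, ⟪v, z⟫ = 0 := by
    intro z
    have hz : z ∈ ⨆ i, p i := by rw [hp]; trivial
    obtain ⟨f, hf, hsum⟩ := bl_exists_sum p hz
    rw [← hsum, inner_sum]
    exact Finset.sum_eq_zero fun i _ => h i (f i) (hf i)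
  exact inner_self_eq_zero.mp (hv v)

lemma bl_decomp {E : Type*} [NormedAddCommGroup E] [InnerProductSpace ℝ E]
    [FiniteDimensional ℝ E] (g : Submodule ℝ (E →ₗ[ℝ] E))
    (hskew : ∀ B ∈ g, ∀ u w : E, ⟪B u, w⟫ = - ⟪u, B w⟫) :
    ∀ (d : ℕ) (V : Submodule ℝ E), finrank ℝ V ≤ d →
    (∀ B ∈ g, ∀ x ∈ V, B x ∈ V) →
    ∃ (n : ℕ) (W : Fin n → Submodule ℝ E),
      (∀ j, W j ≤ V) ∧
      (∀ i j, i ≠ j → ∀ x ∈ W i, ∀ y ∈ W j, ⟪x, y⟫ = 0) ∧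
      (∀ j, W j ≠ ⊥) ∧
      (∀ j, ∀ B ∈ g, ∀ x ∈ W j, B x ∈ W j) ∧
      (∀ j, ∀ U : Submodule ℝ E, U ≤ W j → (∀ B ∈ g, ∀ x ∈ U, B x ∈ U) →
        U ≠ ⊥ → U = W j) ∧
      (⨆ j, W j) = V := by
  intro d
  induction d with
  | zero =>
    intro V hV _
    have hVbot : V = ⊥ := by
      have : finrank ℝ V = 0 := Nat.le_zero.mp hV
      exact Submodule.finrank_eq_zero.mp this
    exact ⟨0, fun j => j.elim0, fun j => j.elim0, fun i => i.elim0, fun j => j.elim0,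
      fun j => j.elim0, fun j => j.elim0, by rw [iSup_of_empty]; exact hVbot.symm⟩
  | succ d ih =>
    intro V hV hVinv
    by_cases hVbot : V = ⊥
    · exact ⟨0, fun j => j.elim0, fun j => j.elim0, fun i => i.elim0, fun j => j.elim0,
        fun j => j.elim0, fun j => j.elim0, by rw [iSup_of_empty]; exact hVbot.symm⟩
    · set P : Submodule ℝ E → Prop :=
        fun U => U ≠ ⊥ ∧ U ≤ V ∧ (∀ B ∈ g, ∀ x ∈ U, B x ∈ U) with hP
      have hs : {k | ∃ U, P U ∧ finrank ℝ U = k}.Nonempty :=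
        ⟨_, V, ⟨hVbot, le_rfl, hVinv⟩, rfl⟩
      obtain ⟨W₁, hPW, hrk⟩ := Nat.sInf_mem hs
      have hW1bot : W₁ ≠ ⊥ := hPW.1
      have hW1V : W₁ ≤ V := hPW.2.1
      have hW1inv : ∀ B ∈ g, ∀ x ∈ W₁, B x ∈ W₁ := hPW.2.2
      have hmin : ∀ U : Submodule ℝ E, U ≤ W₁ → (∀ B ∈ g, ∀ x ∈ U, B x ∈ U) →
          U ≠ ⊥ → U = W₁ := by
        intro U hUle hUinv hU0
        have h1 : sInf {k | ∃ U, P U ∧ finrank ℝ U = k} ≤ finrank ℝ U :=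
          Nat.sInf_le ⟨U, ⟨hU0, hUle.trans hW1V, hUinv⟩, rfl⟩
        exact Submodule.eq_of_le_of_finrank_le hUle (by omega)
      set V' := W₁ᗮ ⊓ V with hV'
      have hsupV : W₁ ⊔ V' = V := Submodule.sup_orthogonal_inf_of_hasOrthogonalProjection hW1V
      have hV'inv : ∀ B ∈ g, ∀ x ∈ V', B x ∈ V' := by
        intro B hB x hx
        refine ⟨?_, hVinv B hB x hx.2⟩
        intro u hu
        have h1 := hskew B hB u x
        have h2 : ⟪B u, x⟫ = 0 := hx.1 (B u) (hW1inv B hB u hu)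
        have := h1.symm.trans (by rw [h2])
        linarith [this]
      have hlt : V' < V := by
        refine lt_of_le_of_ne inf_le_right ?_
        intro hEq
        exact hW1bot (le_bot_iff.mp (by
          have : W₁ ≤ V' := hEq ▸ hW1V
          have h2 : W₁ ≤ W₁ᗮ := this.trans inf_le_left
          exact fun x hx => (Submodule.orthogonal_disjoint W₁).le_bot ⟨hx, h2 hx⟩))
      have hV'le : finrank ℝ V' ≤ d := by
        have := Submodule.finrank_lt_finrank_of_lt hlt
        omega
      obtain ⟨n, W, hWle, horth, hWbot, hWinv, hWmin, hWsup⟩ := ih V' hV'le hV'inv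
      have hWorthW1 : ∀ j, W j ≤ W₁ᗮ := fun j => (hWle j).trans inf_le_left
      refine ⟨n + 1, Fin.cons W₁ W, ?_, ?_, ?_, ?_, ?_, ?_⟩
      · intro j
        induction j using Fin.cases with
        | zero => simpa using hW1V
        | succ j => simpa using (hWle j).trans inf_le_right
      · intro i j hij x hx y hy
        induction i using Fin.cases with
        | zero =>
          induction j using Fin.cases with
          | zero => exact absurd rfl hij
          | succ j =>
            rw [Fin.cons_zero] at hx; rw [Fin.cons_succ] at hy
            exact hWorthW1 j hy x hx
        | succ i =>
          induction j using Fin.cases with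
          | zero =>
            rw [Fin.cons_succ] at hx; rw [Fin.cons_zero] at hy
            rw [real_inner_comm]; exact hWorthW1 i hx y hy
          | succ j =>
            rw [Fin.cons_succ] at hx; rw [Fin.cons_succ] at hy
            exact horth i j (fun h => hij (by rw [h])) x hx y hy
      · intro j
        induction j using Fin.cases with
        | zero => simpa using hW1bot
        | succ j => simpa using hWbot j
      · intro j
        induction j using Fin.cases with
        | zero => simpa using hW1inv
        | succ j => simpa using hWinv j
      · intro j
        induction j using Fin.cases with
        | zero => simpa using hmin
        | succ j => simpa using hWmin j
      · rw [← hsupV]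
        apply le_antisymm
        · apply iSup_le
          intro j
          induction j using Fin.cases with
          | zero => simpa using le_sup_left
          | succ j =>
            rw [Fin.cons_succ]
            exact le_trans (le_trans (le_iSup W j) (le_of_eq hWsup))
              (le_sup_right : V' ≤ W₁ ⊔ V')
        · apply sup_le
          · exact le_trans (by rw [Fin.cons_zero]) (le_iSup (Fin.cons W₁ W) 0)
          · rw [← hWsup]
            apply iSup_le
            intro j
            exact le_trans (by rw [Fin.cons_succ]) (le_iSup (Fin.cons W₁ W) j.succ)


theorem borel_lichnerowicz_of_curvature_generated
    {E : Type*} [NormedAddCommGroup E] [InnerProductSpace ℝ E] [FiniteDimensional ℝ E]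
    (g : Submodule ℝ (E →ₗ[ℝ] E))
    (hbracket : ∀ B ∈ g, ∀ C ∈ g, B * C - C * B ∈ g)
    (hskew : ∀ B ∈ g, ∀ u w : E, ⟪B u, w⟫ = - ⟪u, B w⟫)
    (S : Set (E →ₗ[ℝ] E →ₗ[ℝ] (E →ₗ[ℝ] E)))
    (hS : ∀ R ∈ S, (∀ x y : E, R x y = - R y x) ∧ (∀ x y : E, R x y ∈ g) ∧
      (∀ x y z : E, R x y z + R y z x + R z x y = 0))
    (Q : Set (E →ₗ[ℝ] (E →ₗ[ℝ] E)))
    (hQ : ∀ q ∈ Q, (∀ x : E, q x ∈ g) ∧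
      (∀ x y z : E, ⟪q x y, z⟫ + ⟪q y z, x⟫ + ⟪q z x, y⟫ = 0))
    (hspan : g = Submodule.span ℝ
      ({F : E →ₗ[ℝ] E | ∃ R ∈ S, ∃ x y : E, F = R x y} ∪
       {F : E →ₗ[ℝ] E | ∃ q ∈ Q, ∃ x : E, F = q x})) :
    ∃ (ℓ : ℕ) (Esub : Fin (ℓ + 1) → Submodule ℝ E)
      (gsub : Fin ℓ → Submodule ℝ (E →ₗ[ℝ] E)),
      -- orthogonal decomposition E = E₀ ⊕ E₁ ⊕ … ⊕ E_ℓ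
      (∀ i j, i ≠ j → ∀ x ∈ Esub i, ∀ y ∈ Esub j, ⟪x, y⟫ = 0) ∧
      (⨆ i, Esub i) = ⊤ ∧
      -- 𝔤 acts trivially on E₀
      (∀ B ∈ g, ∀ x ∈ Esub 0, B x = 0) ∧
      -- decomposition 𝔤 = 𝔤₁ ⊕ … ⊕ 𝔤_ℓ into commuting ideals
      (∀ j, gsub j ≤ g) ∧
      (⨆ j, gsub j) = g ∧
      (∀ j, ∀ B ∈ g, ∀ C ∈ gsub j, B * C - C * B ∈ gsub j) ∧
      (∀ i j, i ≠ j → ∀ B ∈ gsub i, ∀ C ∈ gsub j, B * C = C * B) ∧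
      -- 𝔤ⱼ acts irreducibly on Eⱼ
      (∀ j : Fin ℓ,
        (∀ B ∈ gsub j, ∀ x ∈ Esub j.succ, B x ∈ Esub j.succ) ∧
        Esub j.succ ≠ ⊥ ∧
        (∀ W : Submodule ℝ E, W ≤ Esub j.succ →
          (∀ B ∈ gsub j, ∀ x ∈ W, B x ∈ W) → W = ⊥ ∨ W = Esub j.succ)) ∧
      -- 𝔤ⱼ acts trivially on Eᵢ for i ≠ j
      (∀ (j : Fin ℓ) (i : Fin (ℓ + 1)), i ≠ j.succ →
        ∀ B ∈ gsub j, ∀ x ∈ Esub i, B x = 0) := by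
  classical
  -- the trivial part
  set E0 : Submodule ℝ E := ⨅ B : g, LinearMap.ker (B : E →ₗ[ℝ] E) with hE0def
  have hE0mem : ∀ x : E, x ∈ E0 ↔ ∀ B ∈ g, B x = 0 := by
    intro x
    simp [hE0def, Submodule.mem_iInf, LinearMap.mem_ker, Subtype.forall]
  have htriv0 : ∀ B ∈ g, ∀ x ∈ E0, B x = 0 := fun B hB x hx => (hE0mem x).mp hx B hB
  have hE0perp_inv : ∀ B ∈ g, ∀ x ∈ E0ᗮ, B x ∈ E0ᗮ := by
    intro B hB x hx
    rw [Submodule.mem_orthogonal]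
    intro u hu
    have h := hskew B hB u x
    rw [htriv0 B hB u hu] at h
    simp only [inner_zero_left] at h
    linarith
  obtain ⟨n, W, hWle, horthW, hWbot, hWinv, hWmin, hWsup⟩ :=
    bl_decomp g hskew (Module.finrank ℝ (E0ᗮ : Submodule ℝ E)) E0ᗮ le_rfl hE0perp_inv
  set Es : Fin (n+1) → Submodule ℝ E := Fin.cons E0 W with hEsdef
  have hEs0 : Es 0 = E0 := by rw [hEsdef]; exact Fin.cons_zero _ _
  have hEss : ∀ j : Fin n, Es j.succ = W j := by
    intro j; rw [hEsdef]; exact Fin.cons_succ _ _ _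
  have htrivEs : ∀ B ∈ g, ∀ x ∈ Es 0, B x = 0 := by
    intro B hB x hx; exact htriv0 B hB x (by rwa [hEs0] at hx)
  have horth : ∀ i j, i ≠ j → ∀ x ∈ Es i, ∀ y ∈ Es j, ⟪x, y⟫ = 0 := by
    intro i j hij x hx y hy
    induction i using Fin.cases with
    | zero =>
      induction j using Fin.cases with
      | zero => exact absurd rfl hij
      | succ j =>
        rw [hEs0] at hx; rw [hEss j] at hy
        exact Submodule.inner_right_of_mem_orthogonal hx (hWle j hy)
    | succ i =>
      induction j using Fin.cases with
      | zero =>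
        rw [hEss i] at hx; rw [hEs0] at hy
        exact Submodule.inner_left_of_mem_orthogonal hy (hWle i hx)
      | succ j =>
        rw [hEss i] at hx; rw [hEss j] at hy
        exact horthW i j (fun h => hij (by rw [h])) x hx y hy
  have htop : (⨆ i, Es i) = ⊤ := by
    have hoc : E0 ⊔ E0ᗮ = ⊤ := Submodule.sup_orthogonal_of_hasOrthogonalProjection
    apply le_antisymm le_top
    rw [← hoc]
    apply sup_le
    · exact le_trans (le_of_eq hEs0.symm) (le_iSup Es 0)
    · rw [← hWsup]
      exact iSup_le fun j => le_trans (le_of_eq (hEss j).symm) (le_iSup Es j.succ)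
  have hinv : ∀ (i : Fin (n+1)), ∀ B ∈ g, ∀ x ∈ Es i, B x ∈ Es i := by
    intro i B hB x hx
    induction i using Fin.cases with
    | zero => rw [htrivEs B hB x hx]; exact zero_mem _
    | succ i => rw [hEss i] at hx ⊢; exact hWinv i B hB x hx
  -- pair symmetry for curvature tensors
  have hpair : ∀ R ∈ S, ∀ x y z w : E, ⟪R x y z, w⟫ = ⟪R z w x, y⟫ := by
    intro R hR
    obtain ⟨ha, hg, hb⟩ := hS R hR
    exact bl_pair_symm (fun x y z w => ⟪R x y z, w⟫)
      (fun x y z w => by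
        show ⟪R x y z, w⟫ = -⟪R y x z, w⟫
        rw [ha x y]; simp)
      (fun x y z w => by
        show ⟪R x y z, w⟫ = -⟪R x y w, z⟫
        have h := hskew _ (hg x y) z w
        rw [h, real_inner_comm])
      (fun x y z w => by
        show ⟪R x y z, w⟫ + ⟪R y z x, w⟫ + ⟪R z x y, w⟫ = 0
        have h := congrArg (fun v => ⟪v, w⟫) (hb x y z)
        simpa [inner_add_left] using h)
  -- vanishing of curvature terms with mixed arguments
  have hRkill : ∀ R ∈ S, ∀ (a b : Fin (n+1)), (a ≠ b ∨ a = 0) →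
      ∀ x ∈ Es a, ∀ y ∈ Es b, R x y = 0 := by
    intro R hR a b hab x hx y hy
    apply LinearMap.ext
    intro z
    have hz : ∀ w : E, ⟪R x y z, w⟫ = 0 := by
      intro w
      rw [hpair R hR x y z w]
      rcases hab with hab | rfl
      · exact horth a b hab _ (hinv a _ ((hS R hR).2.1 z w) x hx) y hy
      · rw [htrivEs _ ((hS R hR).2.1 z w) x hx]
        simp
    rw [LinearMap.zero_apply]
    exact inner_self_eq_zero.mp (hz _)
  have hQkill : ∀ q ∈ Q, ∀ (a b : Fin (n+1)), a ≠ b →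
      ∀ x ∈ Es a, ∀ y ∈ Es b, q x y = 0 := by
    intro q hq a b hab x hx y hy
    apply bl_vec_eq_zero Es htop
    intro c z hz
    rcases eq_or_ne c a with rfl | hca
    · exact horth b c (Ne.symm hab) _ (hinv b _ ((hQ q hq).1 x) y hy) z hz
    · have hsum := (hQ q hq).2 x y z
      have h1 : ⟪q y z, x⟫ = 0 :=
        horth c a hca _ (hinv c _ ((hQ q hq).1 y) z hz) x hx
      have h2 : ⟪q z x, y⟫ = 0 :=
        horth a b hab _ (hinv a _ ((hQ q hq).1 z) x hx) y hy
      linarith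
  have hQkill0 : ∀ q ∈ Q, ∀ x ∈ Es 0, q x = 0 := by
    intro q hq x hx
    apply bl_map_eq_zero Es htop
    intro c z hz
    rcases Fin.eq_zero_or_eq_succ c with rfl | ⟨k, rfl⟩
    · exact htrivEs _ ((hQ q hq).1 x) z hz
    · exact hQkill q hq 0 k.succ (Fin.succ_ne_zero k).symm x hx z hz
  -- the pieces of the algebra
  set gs : Fin n → Submodule ℝ (E →ₗ[ℝ] E) :=
    fun j => g ⊓ ⨅ (i : Fin (n+1)) (_ : i ≠ j.succ), blVanishingOn (Es i) with hgsdef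
  have hgsmem : ∀ (j : Fin n) (A : E →ₗ[ℝ] E),
      A ∈ gs j ↔ A ∈ g ∧ ∀ i, i ≠ j.succ → ∀ x ∈ Es i, A x = 0 := by
    intro j A
    rw [hgsdef]
    simp [Submodule.mem_inf, Submodule.mem_iInf, blVanishingOn_mem]
  have hgsle : ∀ j, gs j ≤ g := fun j => fun A hA => ((hgsmem j A).mp hA).1
  -- curvature generators with equal arguments lie in the pieces
  have hRmem : ∀ R ∈ S, ∀ j : Fin n, ∀ u ∈ Es j.succ, ∀ v ∈ Es j.succ,
      R u v ∈ gs j := by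
    intro R hR j u hu v hv
    rw [hgsmem]
    refine ⟨(hS R hR).2.1 u v, ?_⟩
    intro i hi z hz
    have h1 : R v z = 0 := hRkill R hR j.succ i (Or.inl (Ne.symm hi)) v hv z hz
    have h2 : R z u = 0 := hRkill R hR i j.succ (Or.inl hi) z hz u hu
    have h3 := (hS R hR).2.2 u v z
    rw [h1, h2] at h3
    simpa using h3
  have hQmem : ∀ q ∈ Q, ∀ j : Fin n, ∀ u ∈ Es j.succ, q u ∈ gs j := by
    intro q hq j u hu
    rw [hgsmem]
    refine ⟨(hQ q hq).1 u, ?_⟩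
    intro i hi z hz
    rcases Fin.eq_zero_or_eq_succ i with rfl | ⟨k, rfl⟩
    · exact htrivEs _ ((hQ q hq).1 u) z hz
    · exact hQkill q hq j.succ k.succ (Ne.symm hi) u hu z hz
  -- g is the (internal) sum of the pieces
  have hgeq : (⨆ j, gs j) = g := by
    apply le_antisymm (iSup_le hgsle)
    rw [hspan, Submodule.span_le]
    rintro F (⟨R, hR, x, y, rfl⟩ | ⟨q, hq, x, rfl⟩)
    · rw [SetLike.mem_coe]
      obtain ⟨f, hf, hx⟩ := bl_exists_sum Es (by rw [htop]; exact Submodule.mem_top :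
        x ∈ ⨆ i, Es i)
      obtain ⟨f2, hf2, hy⟩ := bl_exists_sum Es (by rw [htop]; exact Submodule.mem_top :
        y ∈ ⨆ i, Es i)
      have hxy : R x y = ∑ a, ∑ b, R (f a) (f2 b) := by
        rw [← hx, ← hy, map_sum R f Finset.univ, LinearMap.sum_apply]
        exact Finset.sum_congr rfl fun a _ => map_sum _ _ _
      rw [hxy]
      apply Submodule.sum_mem
      intro a _
      apply Submodule.sum_mem
      intro b _
      rcases eq_or_ne a b with rfl | hab
      · rcases Fin.eq_zero_or_eq_succ a with rfl | ⟨j, rfl⟩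
        · rw [hRkill R hR 0 0 (Or.inr rfl) _ (hf 0) _ (hf2 0)]
          exact zero_mem _
        · exact le_iSup gs j (hRmem R hR j _ (hf j.succ) _ (hf2 j.succ))
      · rw [hRkill R hR a b (Or.inl hab) _ (hf a) _ (hf2 b)]
        exact zero_mem _
    · rw [SetLike.mem_coe]
      obtain ⟨f, hf, hx⟩ := bl_exists_sum Es (by rw [htop]; exact Submodule.mem_top :
        x ∈ ⨆ i, Es i)
      have hxq : q x = ∑ a, q (f a) := by rw [← hx, map_sum]
      rw [hxq]
      apply Submodule.sum_mem
      intro a _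
      rcases Fin.eq_zero_or_eq_succ a with rfl | ⟨j, rfl⟩
      · rw [hQkill0 q hq _ (hf 0)]
        exact zero_mem _
      · exact le_iSup gs j (hQmem q hq j _ (hf j.succ))
  have hBdec : ∀ B ∈ g, ∃ f : Fin n → (E →ₗ[ℝ] E),
      (∀ j, f j ∈ gs j) ∧ ∑ j, f j = B := by
    intro B hB
    exact bl_exists_sum gs (by rw [hgeq]; exact hB)
  refine ⟨n, Es, gs, horth, htop, htrivEs, hgsle, hgeq, ?_, ?_, ?_, ?_⟩
  · -- ideals
    intro j B hB C hC
    rw [hgsmem] at hC ⊢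
    refine ⟨hbracket B hB C hC.1, ?_⟩
    intro i hi x hx
    simp only [LinearMap.sub_apply, Module.End.mul_apply]
    rw [hC.2 i hi x hx, hC.2 i hi _ (hinv i B hB x hx), map_zero, sub_zero]
  · -- commuting
    intro i j hij B hB C hC
    rw [hgsmem] at hB hC
    have hz : B * C - C * B = 0 := by
      apply bl_map_eq_zero Es htop
      intro k x hx
      simp only [LinearMap.sub_apply, Module.End.mul_apply]
      rcases eq_or_ne k j.succ with rfl | hk
      · have hCx : C x ∈ Es j.succ := hinv _ C hC.1 x hx
        have hne : j.succ ≠ i.succ := fun h => hij (Fin.succ_injective _ h).symm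
        rw [hB.2 j.succ hne _ hCx, hB.2 j.succ hne x hx, map_zero, sub_zero]
      · rw [hC.2 k hk x hx, map_zero,
          hC.2 k hk _ (hinv k B hB.1 x hx), sub_zero]
    have := sub_eq_zero.mp hz
    exact this
  · -- irreducibility
    intro j
    refine ⟨fun B hB x hx => hinv j.succ B (hgsle j hB) x hx,
      by rw [hEss j]; exact hWbot j, ?_⟩
    intro W' hW'le hW'inv
    by_cases hbt : W' = ⊥
    · exact Or.inl hbt
    · right
      have hW'ginv : ∀ B ∈ g, ∀ x ∈ W', B x ∈ W' := by
        intro B hB x hx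
        obtain ⟨f, hf, hsum⟩ := hBdec B hB
        rw [← hsum, LinearMap.sum_apply]
        apply Submodule.sum_mem
        intro k _
        rcases eq_or_ne k j with rfl | hkj
        · exact hW'inv (f k) (hf k) x hx
        · rw [((hgsmem k (f k)).mp (hf k)).2 j.succ
            (fun h => hkj ((Fin.succ_injective _ h).symm)) x (hW'le hx)]
          exact zero_mem _
      rw [hEss j]
      exact hWmin j W' (by rw [hEss j] at hW'le; exact hW'le) hW'ginv hbt
  · -- pieces act trivially elsewhere
    intro j i hi B hB x hx
    exact ((hgsmem j B).mp hB).2 i hi x hx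
end
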